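/- Let d be a positive integer. For any polynomial c of degree at most d with nonnegative coefficients, c(t) = Σ_{ν=0}^d a_ν t^ν, define φ(x) = a_0·x + Σ_{ν=1}^d a_ν(x^{ν+1} + ((ν+1)/2)x^ν). Then for all x ≥ 0 and w ≥ 1: w·c(x+w) ≤ φ(x+w) − φ(x) ≤ (d+1)·w·c(x+w). -/

import Mathlib

noncomputable def auxA (x y : ℝ) : ℕ → ℝ
  | 0 => 0
  | n + 1 => y ^ n + x * auxA x y n

lemma auxA_succ (x y : ℝ) (n : ℕ) : auxA x y (n + 1) = y ^ n + x * auxA x y n := rfl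

lemma auxA_nonneg (x y : ℝ) (hx : 0 ≤ x) (hy : 0 ≤ y) : ∀ n, 0 ≤ auxA x y n
  | 0 => le_refl 0
  | n + 1 =>
    add_nonneg (pow_nonneg hy n) (mul_nonneg hx (auxA_nonneg x y hx hy n))

lemma auxA_sub (x y : ℝ) : ∀ n, y ^ n - x ^ n = (y - x) * auxA x y n
  | 0 => by simp [auxA]
  | n + 1 => by
    show y ^ (n+1) - x ^ (n+1) = (y - x) * (y ^ n + x * auxA x y n)
    linear_combination x * auxA_sub x y n

lemma auxA_ge (x y : ℝ) (hx : 0 ≤ x) (hy : 0 ≤ y) (n : ℕ) :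
    y ^ n ≤ auxA x y (n + 1) := by
  have := mul_nonneg hx (auxA_nonneg x y hx hy n)
  rw [auxA_succ]
  linarith

lemma auxA_le (x y : ℝ) (hx : 0 ≤ x) (hxy : x ≤ y) (n : ℕ) :
    auxA x y (n + 1) ≤ ((n : ℝ) + 1) * y ^ n := by
  induction n with
  | zero => simp [auxA]
  | succ n IH =>
    have hy : 0 ≤ y := le_trans hx hxy
    have hp : (0:ℝ) ≤ y ^ n := pow_nonneg hy n
    rw [auxA_succ]
    have h1 : x * auxA x y (n+1) ≤ y * (((n:ℝ) + 1) * y ^ n) := by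
      calc x * auxA x y (n+1) ≤ x * (((n:ℝ)+1) * y ^ n) :=
            mul_le_mul_of_nonneg_left IH hx
        _ ≤ y * (((n:ℝ)+1) * y ^ n) := by
            apply mul_le_mul_of_nonneg_right hxy
            positivity
    have h2 : y * (((n:ℝ)+1) * y ^ n) = ((n:ℝ)+1) * y ^ (n+1) := by ring
    push_cast
    linarith
  
lemma auxQ (x w : ℝ) (hx : 0 ≤ x) (hw : 1 ≤ w) (n : ℕ) :
    (2 * x + (n : ℝ) + 2) * auxA x (x + w) (n + 1)
      ≤ 2 * ((n : ℝ) + 1) * (x + w) ^ (n + 1) := by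
  induction n with
  | zero =>
    rw [auxA_succ]
    simp [auxA]
    nlinarith
  | succ n IH =>
    set y := x + w with hy
    have hy1 : (1:ℝ) ≤ y := by rw [hy]; linarith
    have hy0 : (0:ℝ) ≤ y := le_trans zero_le_one hy1
    have hxy : x ≤ y := by rw [hy]; linarith
    have hA := auxA_le x y hx hxy n
    have hAn := auxA_nonneg x y hx hy0 (n + 1)
    have hp : (0:ℝ) ≤ y ^ n := pow_nonneg hy0 n
    rw [auxA_succ]
    have h1 : x * ((2 * x + (n:ℝ) + 2) * auxA x y (n+1))
        ≤ x * (2 * ((n:ℝ) + 1) * y ^ (n+1)) := mul_le_mul_of_nonneg_left IH hx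
    have h2 : x * auxA x y (n+1) ≤ x * (((n:ℝ)+1) * y ^ n) :=
      mul_le_mul_of_nonneg_left hA hx
    have hyp : y ^ (n+1) = y * y ^ n := by ring
    have hyp2 : y ^ (n+1+1) = y * y * y ^ n := by ring
    rw [hyp2, hyp]
    rw [hyp] at h1
    have hD1 : 2*((n:ℝ)+2)*(y*y*y^n) - (2*x+(n:ℝ)+3)*(y*y^n)
        - 2*((n:ℝ)+1)*(x*(y*y^n)) - ((n:ℝ)+1)*(x*y^n)
        = (2*(n:ℝ)+4)*((w-1)*(y*y^n)) + ((n:ℝ)+1)*(w*y^n) := by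
      rw [hy]; ring
    have hT1 : (0:ℝ) ≤ (w-1)*(y*y^n) :=
      mul_nonneg (sub_nonneg.2 hw) (mul_nonneg hy0 hp)
    have hT2 : (0:ℝ) ≤ w*y^n := mul_nonneg (by linarith) hp
    have hT3 : (0:ℝ) ≤ (n:ℝ)*((w-1)*(y*y^n)) :=
      mul_nonneg (Nat.cast_nonneg n) hT1
    have hT4 : (0:ℝ) ≤ (n:ℝ)*(w*y^n) := mul_nonneg (Nat.cast_nonneg n) hT2
    push_cast
    nlinarith [h1, h2, hD1, hT1, hT2, hT3, hT4]

lemma key (x w : ℝ) (hx : 0 ≤ x) (hw : 1 ≤ w) (n : ℕ) :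
    w * (x+w) ^ (n+1) ≤ ((x+w) ^ (n+2) - x ^ (n+2))
        + (((n:ℝ)+2)/2) * ((x+w) ^ (n+1) - x ^ (n+1))
    ∧ ((x+w) ^ (n+2) - x ^ (n+2)) + (((n:ℝ)+2)/2) * ((x+w) ^ (n+1) - x ^ (n+1))
        ≤ ((n:ℝ)+2) * (w * (x+w) ^ (n+1)) := by
  set y := x + w with hy
  have hw0 : (0:ℝ) ≤ w := le_trans zero_le_one hw
  have hy0 : (0:ℝ) ≤ y := by rw [hy]; linarith
  have hyx : y - x = w := by rw [hy]; ring
  have h1 : y ^ (n+2) - x ^ (n+2) = w * auxA x y (n+2) := by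
    rw [auxA_sub x y (n+2), hyx]
  have h2 : y ^ (n+1) - x ^ (n+1) = w * auxA x y (n+1) := by
    rw [auxA_sub x y (n+1), hyx]
  have hge : y ^ (n+1) ≤ auxA x y (n+2) := auxA_ge x y hx hy0 (n+1)
  have hA0 := auxA_nonneg x y hx hy0 (n+1)
  have hQ := auxQ x w hx hw n
  rw [← hy] at hQ
  constructor
  · rw [h1, h2]
    have h3 : w * y ^ (n+1) ≤ w * auxA x y (n+2) := mul_le_mul_of_nonneg_left hge hw0
    nlinarith [mul_nonneg (mul_nonneg hw0 hA0) (by positivity : (0:ℝ) ≤ ((n:ℝ)+2)/2)]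
  · rw [h1, h2]
    have hunf : auxA x y (n+2) = y ^ (n+1) + x * auxA x y (n+1) := auxA_succ x y (n+1)
    have hkey : auxA x y (n+2) + (((n:ℝ)+2)/2) * auxA x y (n+1)
        ≤ ((n:ℝ)+2) * y ^ (n+1) := by
      rw [hunf]
      nlinarith [hQ]
    nlinarith [mul_le_mul_of_nonneg_left hkey hw0]

theorem faulhaber_potential_bounds (d : ℕ) (hd : 0 < d)
    (a : ℕ → ℝ) (ha : ∀ ν ≤ d, 0 ≤ a ν)
    (c : ℝ → ℝ) (hc : ∀ t, c t = ∑ ν ∈ Finset.range (d + 1), a ν * t ^ ν)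
    (φ : ℝ → ℝ)
    (hφ : ∀ x, φ x = a 0 * x +
      ∑ ν ∈ Finset.Icc 1 d, a ν * (x ^ (ν + 1) + (((ν : ℝ) + 1) / 2) * x ^ ν))
    (x w : ℝ) (hx : 0 ≤ x) (hw : 1 ≤ w) :
    w * c (x + w) ≤ φ (x + w) - φ x ∧
      φ (x + w) - φ x ≤ ((d : ℝ) + 1) * (w * c (x + w)) := by
  set y := x + w with hy
  have hw0 : (0:ℝ) ≤ w := le_trans zero_le_one hw
  have hy0 : (0:ℝ) ≤ y := by rw [hy]; linarith
  have ha0 : 0 ≤ a 0 := ha 0 (Nat.zero_le d)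
  have hcy : w * c y = a 0 * w + ∑ i ∈ Finset.range d, a (i+1) * (w * y ^ (i+1)) := by
    rw [hc, Finset.sum_range_succ', mul_add, Finset.mul_sum]
    simp only [pow_zero, mul_one]
    rw [add_comm]
    congr 1
    · ring
    · exact Finset.sum_congr rfl fun i _ => by ring
  have hsum : ∀ t : ℝ, (∑ ν ∈ Finset.Icc 1 d, a ν * (t ^ (ν+1) + ((ν:ℝ)+1)/2 * t ^ ν))
      = ∑ i ∈ Finset.range d, a (i+1) * (t ^ (i+2) + (((i:ℝ)+2)/2) * t ^ (i+1)) := by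
    intro t
    rw [← Finset.Ico_add_one_right_eq_Icc, Finset.sum_Ico_eq_sum_range]
    refine Finset.sum_congr (by norm_num) ?_
    intro i _
    rw [Nat.add_comm 1 i]
    push_cast
    ring
  have hdiff : (∑ i ∈ Finset.range d, a (i+1) * (y ^ (i+2) + (((i:ℝ)+2)/2) * y ^ (i+1)))
      - ∑ i ∈ Finset.range d, a (i+1) * (x ^ (i+2) + (((i:ℝ)+2)/2) * x ^ (i+1))
      = ∑ i ∈ Finset.range d, a (i+1) *
        ((y ^ (i+2) - x ^ (i+2)) + (((i:ℝ)+2)/2) * (y ^ (i+1) - x ^ (i+1))) := by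
    rw [← Finset.sum_sub_distrib]
    exact Finset.sum_congr rfl fun i _ => by ring
  have ha0w : a 0 * y - a 0 * x = a 0 * w := by rw [hy]; ring
  have hφdiff : φ y - φ x = a 0 * w +
      ∑ i ∈ Finset.range d, a (i+1) *
        ((y ^ (i+2) - x ^ (i+2)) + (((i:ℝ)+2)/2) * (y ^ (i+1) - x ^ (i+1))) := by
    rw [hφ, hφ, hsum y, hsum x]
    linarith [hdiff, ha0w]
  constructor
  · rw [hcy, hφdiff]
    apply add_le_add_right
    apply Finset.sum_le_sum
    intro i hi
    have hai : 0 ≤ a (i+1) := ha (i+1) (Finset.mem_range.mp hi)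
    have hk := (key x w hx hw i).1
    rw [← hy] at hk
    exact mul_le_mul_of_nonneg_left hk hai
  · rw [hcy, hφdiff, mul_add, Finset.mul_sum]
    apply add_le_add
    · nlinarith [mul_nonneg ha0 hw0, Nat.cast_nonneg (α := ℝ) d]
    · apply Finset.sum_le_sum
      intro i hi
      have hid : i < d := Finset.mem_range.mp hi
      have hai : 0 ≤ a (i+1) := ha (i+1) hid
      have hk := (key x w hx hw i).2
      rw [← hy] at hk
      have hcast : ((i:ℝ)+2) ≤ (d:ℝ)+1 := by
        have : (i:ℝ) + 1 ≤ (d:ℝ) := by exact_mod_cast hid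
        linarith
      have hnn : 0 ≤ a (i+1) * (w * y ^ (i+1)) := by positivity
      calc a (i+1) * ((y ^ (i+2) - x ^ (i+2)) + (((i:ℝ)+2)/2) * (y ^ (i+1) - x ^ (i+1)))
          ≤ a (i+1) * (((i:ℝ)+2) * (w * y ^ (i+1))) := mul_le_mul_of_nonneg_left hk hai
        _ = ((i:ℝ)+2) * (a (i+1) * (w * y ^ (i+1))) := by ring
        _ ≤ ((d:ℝ)+1) * (a (i+1) * (w * y ^ (i+1))) :=
            mul_le_mul_of_nonneg_right hcast hnn
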